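/- Let K with vertex set {1,...,n}, let K(K) = F[K] ⊗ Λ(x_1,...,x_n) be the Koszul complex of the Stanley-Reisner ring F[K] with dx_i = v_i, and let R(K) = K(K)/(v_i², v_i x_i : i = 1,...,n). Then the map φ : C*(K) → R(K) sending the Kronecker dual σ* ∈ C̃*(K_I) of a simplex σ = {i_1 < ... < i_k} ∈ K_I with I − σ = {j_1 < ... < j_l} to v_{i_1}···v_{i_k} x_{j_1}···x_{j_l} is an isomorphism of differential graded algebras. -/

import Mathlib

/-- An abstract simplicial complex (given as a finite collection of finite subsets of the
finite vertex type `V`, closed under taking subsets). -/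
def IsComplex {V : Type*} [DecidableEq V] (K : Finset (Finset V)) : Prop :=
  ∀ σ ∈ K, ∀ τ ⊆ σ, τ ∈ K

variable {V : Type*} [Fintype V] [LinearOrder V] (F : Type*) [Field F]

/-- Basis of the dga `𝒞*(K) = F ⊕ ⨁_{∅ ≠ I ⊆ V(K)} C̃^{*-|I|-1}(K_I)`: pairs `(I, σ)`
with `σ ∈ K_I`, the pair `(I, σ)` encoding the Kronecker dual `σ* ∈ C̃^{|σ|-1}(K_I)`
(of total degree `|I| + |σ|`); the pair `(∅, ∅)` encodes the unit of `F = 𝒞^0(K)`. -/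
def BC (K : Finset (Finset V)) : Type _ :=
  {x : Finset V × Finset V // x.2 ⊆ x.1 ∧ x.2 ∈ K}

/-- Basis of `R(K) = K(K)/(v_i², v_i x_i)`, the quotient of the Koszul complex
`K(K) = F[K] ⊗ Λ(x_1,...,x_n)` of the Stanley–Reisner ring: pairs `(S, T)` encoding the
monomials `v_S x_T` with `S ∈ K` and `S ∩ T = ∅` (of degree `2|S| + |T|`). -/
def BR (K : Finset (Finset V)) : Type _ :=
  {x : Finset V × Finset V // x.1 ∈ K ∧ Disjoint x.1 x.2}

/-- Number of inversions between two finite sets (used for Koszul signs). -/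
def inversions (σ τ : Finset V) : ℕ :=
  ((σ ×ˢ τ).filter fun ab => ab.2 < ab.1).card

/-- The product of the dga `𝒞*(K)`: `σ* · τ* = ι_{I,J}^*(σ* ⋆ τ*)` for `I ∩ J = ∅`
(with the Koszul sign) and `0` for `I ∩ J ≠ ∅`. -/
noncomputable def mulC (K : Finset (Finset V)) (x y : BC (V := V) K →₀ F) :
    BC (V := V) K →₀ F :=
  x.sum fun a r => y.sum fun b t =>
    if h : a.1.1 ∩ b.1.1 = ∅ ∧ a.1.2 ∪ b.1.2 ∈ K then
      ((r * t) * (-1 : F) ^ inversions (a.1.1 \ a.1.2) (b.1.1 \ b.1.2)) •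
        Finsupp.single
          (⟨(a.1.1 ∪ b.1.1, a.1.2 ∪ b.1.2),
            Finset.union_subset_union a.2.1 b.2.1, h.2⟩ : BC K) 1
    else 0

/-- The differential of `𝒞*(K)`, induced by the simplicial coboundary maps of the
reduced cochain complexes `C̃*(K_I)`. -/
noncomputable def deltaC (K : Finset (Finset V)) (x : BC (V := V) K →₀ F) :
    BC (V := V) K →₀ F :=
  x.sum fun a r => ∑ v : V,
    if h : v ∈ a.1.1 \ a.1.2 ∧ insert v a.1.2 ∈ K then
      (r * (-1 : F) ^ (((a.1.1 \ a.1.2).filter (· < v)).card)) •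
        Finsupp.single
          (⟨(a.1.1, insert v a.1.2),
            Finset.insert_subset_iff.mpr ⟨(Finset.mem_sdiff.mp h.1).1, a.2.1⟩,
            h.2⟩ : BC K) 1
    else 0

/-- The product of `R(K)`: `(v_S x_T)(v_{S'} x_{T'}) = ± v_{S∪S'} x_{T∪T'}`, which is
zero when the supports meet (by `v_i² = x_i² = v_i x_i = 0`) or `S ∪ S' ∉ K`. -/
noncomputable def mulR (K : Finset (Finset V)) (x y : BR (V := V) K →₀ F) :
    BR (V := V) K →₀ F :=
  x.sum fun a r => y.sum fun b t =>
    if h : (a.1.1 ∪ a.1.2) ∩ (b.1.1 ∪ b.1.2) = ∅ ∧ a.1.1 ∪ b.1.1 ∈ K then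
      ((r * t) * (-1 : F) ^ inversions a.1.2 b.1.2) •
        Finsupp.single
          (⟨(a.1.1 ∪ b.1.1, a.1.2 ∪ b.1.2), h.2, by
            have h1 := a.2.2
            have h2 := b.2.2
            have h3 : Disjoint (a.1.1 ∪ a.1.2) (b.1.1 ∪ b.1.2) :=
              Finset.disjoint_iff_inter_eq_empty.mpr h.1
            simp only [Finset.disjoint_union_left, Finset.disjoint_union_right] at *
            tauto⟩ : BR K) 1
    else 0

/-- The Koszul differential of `R(K)`: the derivation with `d v_i = 0`, `d x_i = v_i`. -/
noncomputable def dR (K : Finset (Finset V)) (x : BR (V := V) K →₀ F) :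
    BR (V := V) K →₀ F :=
  x.sum fun a r => ∑ v : V,
    if h : v ∈ a.1.2 ∧ insert v a.1.1 ∈ K then
      (r * (-1 : F) ^ ((a.1.2.filter (· < v)).card)) •
        Finsupp.single
          (⟨(insert v a.1.1, a.1.2.erase v), h.2, by
            have hd := a.2.2
            refine Finset.disjoint_left.mpr fun x hx hx2 => ?_
            rcases Finset.mem_insert.mp hx with rfl | hx1
            · exact (Finset.notMem_erase _ _) hx2
            · exact (Finset.disjoint_left.mp hd hx1) (Finset.mem_of_mem_erase hx2)⟩ :
            BR K) 1
    else 0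

/-- The map `φ : 𝒞*(K) → R(K)`, `σ* ↦ v_σ x_{I∖σ}` for `σ* ∈ C̃*(K_I)`. -/
noncomputable def phi (K : Finset (Finset V)) (x : BC (V := V) K →₀ F) :
    BR (V := V) K →₀ F :=
  Finsupp.mapDomain
    (fun a : BC (V := V) K =>
      (⟨(a.1.2, a.1.1 \ a.1.2), a.2.2, Finset.disjoint_sdiff⟩ : BR K)) x

/-- The underlying index bijection of `φ`. -/
def eB (K : Finset (Finset V)) (a : BC (V := V) K) : BR (V := V) K :=
  ⟨(a.1.2, a.1.1 \ a.1.2), a.2.2, Finset.disjoint_sdiff⟩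

@[simp] lemma eB_fst (K : Finset (Finset V)) (a : BC (V := V) K) :
    (eB K a).1.1 = a.1.2 := rfl

@[simp] lemma eB_snd (K : Finset (Finset V)) (a : BC (V := V) K) :
    (eB K a).1.2 = a.1.1 \ a.1.2 := rfl

lemma phi_eq (K : Finset (Finset V)) : phi F K = Finsupp.mapDomain (eB K) := rfl

lemma eB_inj (K : Finset (Finset V)) : Function.Injective (eB (V := V) K) := by
  intro a b h
  have h1 : a.1.2 = b.1.2 := congrArg (fun z => z.1.1) h
  have h2 : a.1.1 \ a.1.2 = b.1.1 \ b.1.2 := congrArg (fun z => z.1.2) h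
  have hI : a.1.1 = b.1.1 := by
    rw [← Finset.union_sdiff_of_subset a.2.1, ← Finset.union_sdiff_of_subset b.2.1, h2, h1]
  exact Subtype.ext (Prod.ext hI h1)

lemma eB_surj (K : Finset (Finset V)) : Function.Surjective (eB (V := V) K) := by
  rintro ⟨⟨S, T⟩, hS, hd⟩
  exact ⟨⟨(S ∪ T, S), Finset.subset_union_left, hS⟩,
    Subtype.ext (Prod.ext rfl (Finset.union_sdiff_cancel_left hd))⟩

lemma sdiff_union_sdiff_of_disj {I J σ τ : Finset V} (hσ : σ ⊆ I) (hτ : τ ⊆ J)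
    (hIJ : I ∩ J = ∅) : (I ∪ J) \ (σ ∪ τ) = (I \ σ) ∪ (J \ τ) := by
  have hd : ∀ x : V, x ∈ I → x ∉ J := fun x hx hxJ =>
    Finset.eq_empty_iff_forall_notMem.mp hIJ x (Finset.mem_inter.mpr ⟨hx, hxJ⟩)
  ext x
  simp only [Finset.mem_sdiff, Finset.mem_union]
  constructor
  · rintro ⟨h1, h2⟩
    push_neg at h2
    rcases h1 with h | h
    · exact Or.inl ⟨h, h2.1⟩
    · exact Or.inr ⟨h, h2.2⟩
  · rintro (⟨h1, h2⟩ | ⟨h1, h2⟩)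
    · exact ⟨Or.inl h1, fun h => h.elim h2 fun ht => hd x h1 (hτ ht)⟩
    · exact ⟨Or.inr h1, fun h => h.elim (fun hs => hd x (hσ hs) h1) h2⟩

lemma phi_bij (K : Finset (Finset V)) : Function.Bijective (phi F K) := by
  rw [phi_eq]
  constructor
  · exact Finsupp.mapDomain_injective (eB_inj K)
  · intro y
    set g := Equiv.ofBijective (eB (V := V) K) ⟨eB_inj K, eB_surj K⟩ with hg
    refine ⟨Finsupp.mapDomain g.symm y, ?_⟩
    rw [← Finsupp.mapDomain_comp]
    have h : eB (V := V) K ∘ ⇑g.symm = id := funext fun b => g.apply_symm_apply b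
    rw [h, Finsupp.mapDomain_id]

lemma phi_mul (K : Finset (Finset V)) (x y : BC (V := V) K →₀ F) :
    phi F K (mulC F K x y) = mulR F K (phi F K x) (phi F K y) := by
  rw [phi_eq]
  unfold mulC mulR
  rw [Finsupp.mapDomain_sum]
  refine ((Finsupp.sum_mapDomain_index ?_ ?_).trans ?_).symm
  · intro b
    simp
    exact Finset.sum_eq_zero fun c _ => by beta_reduce; split <;> [exact zero_smul _ _; rfl]
  · intro b m₁ m₂
    rw [← Finsupp.sum_add]
    apply Finsupp.sum_congr
    intro c _
    beta_reduce
    split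
    · rw [add_mul, add_mul]; exact add_smul _ _ _
    · simp
  · apply Finsupp.sum_congr
    intro a _
    beta_reduce
    rw [Finsupp.mapDomain_sum]
    refine ((Finsupp.sum_mapDomain_index ?_ ?_).trans ?_)
    · intro b
      simp
      intro _ _; exact zero_smul _ _
    · intro b m₁ m₂
      beta_reduce
      split
      · rw [mul_add, add_mul]; exact add_smul _ _ _
      · simp
    · apply Finsupp.sum_congr
      intro b _
      simp only [eB_fst, eB_snd, Finset.union_sdiff_of_subset a.2.1,
        Finset.union_sdiff_of_subset b.2.1]
      by_cases hc : a.1.1 ∩ b.1.1 = ∅ ∧ a.1.2 ∪ b.1.2 ∈ K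
      · have hc' : (a.1.2 ∪ a.1.1 \ a.1.2) ∩ (b.1.2 ∪ b.1.1 \ b.1.2) = ∅ ∧ a.1.2 ∪ b.1.2 ∈ K := by
          rwa [Finset.union_sdiff_of_subset a.2.1, Finset.union_sdiff_of_subset b.2.1]
        refine (dif_pos hc').trans ?_
        refine Eq.trans ?_ (congrArg (Finsupp.mapDomain (eB K)) (dif_pos hc)).symm
        refine Eq.trans ?_ (Finsupp.mapDomain_smul _ _).symm
        refine Eq.trans ?_ (congrArg (fun z : BR K →₀ F =>
          (x a * y b * (-1 : F) ^ inversions (a.1.1 \ a.1.2) (b.1.1 \ b.1.2)) • z)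
          (Finsupp.mapDomain_single (f := eB K))).symm
        congr 1
        congr 1
        apply Subtype.ext
        apply Prod.ext
        · rfl
        · exact (sdiff_union_sdiff_of_disj a.2.1 b.2.1 hc.1).symm
      · have hc' : ¬ ((a.1.2 ∪ a.1.1 \ a.1.2) ∩ (b.1.2 ∪ b.1.1 \ b.1.2) = ∅ ∧ a.1.2 ∪ b.1.2 ∈ K) := by
          rwa [Finset.union_sdiff_of_subset a.2.1, Finset.union_sdiff_of_subset b.2.1]
        exact (dif_neg hc').trans ((congrArg (Finsupp.mapDomain (eB K)) (dif_neg hc)).trans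
          Finsupp.mapDomain_zero).symm

lemma phi_delta (K : Finset (Finset V)) (x : BC (V := V) K →₀ F) :
    phi F K (deltaC F K x) = dR F K (phi F K x) := by
  rw [phi_eq]
  unfold deltaC dR
  rw [Finsupp.mapDomain_sum]
  refine ((Finsupp.sum_mapDomain_index ?_ ?_).trans ?_).symm
  · intro b
    simp
    exact Finset.sum_eq_zero fun c _ => by beta_reduce; split <;> [exact zero_smul _ _; rfl]
  · intro b m₁ m₂
    rw [← Finset.sum_add_distrib]
    apply Finset.sum_congr rfl
    intro v _
    split
    · rw [add_mul]; exact add_smul _ _ _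
    · simp
  · apply Finsupp.sum_congr
    intro a _
    beta_reduce
    rw [Finsupp.mapDomain_finset_sum]
    apply Finset.sum_congr rfl
    intro v _
    simp only [eB_fst, eB_snd]
    by_cases hc : v ∈ a.1.1 \ a.1.2 ∧ insert v a.1.2 ∈ K
    · refine (dif_pos hc).trans ?_
      refine Eq.trans ?_ (congrArg (Finsupp.mapDomain (eB K)) (dif_pos hc)).symm
      refine Eq.trans ?_ (Finsupp.mapDomain_smul _ _).symm
      refine Eq.trans ?_ (congrArg (fun z : BR K →₀ F =>
        (x a * (-1 : F) ^ (((a.1.1 \ a.1.2).filter (· < v)).card)) • z)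
        (Finsupp.mapDomain_single (f := eB K))).symm
      congr 1
      congr 1
      apply Subtype.ext
      apply Prod.ext
      · rfl
      · exact (Finset.sdiff_insert a.1.1 a.1.2 v).symm
    · exact (dif_neg hc).trans ((congrArg (Finsupp.mapDomain (eB K)) (dif_neg hc)).trans
        Finsupp.mapDomain_zero).symm

/-- `φ : 𝒞*(K) → R(K) = K(K)/(v_i², v_i x_i)` is an isomorphism of differential graded
algebras: it is linear and bijective, multiplicative, commutes with the differentials,
sends `σ*` (for `σ ∈ K_I`) to `v_σ x_{I∖σ}`, and preserves the grading
(`|I| + |σ| = 2|σ| + |I∖σ|`). -/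
theorem phi_dga_iso (K : Finset (Finset V)) [DecidableEq V] (hK : IsComplex K)
    (hV : ∀ v : V, ({v} : Finset V) ∈ K) :
    Function.Bijective (phi F K) ∧
    (∀ x y, phi F K (x + y) = phi F K x + phi F K y) ∧
    (∀ (r : F) x, phi F K (r • x) = r • phi F K x) ∧
    (∀ x y, phi F K (mulC F K x y) = mulR F K (phi F K x) (phi F K y)) ∧
    (∀ x, phi F K (deltaC F K x) = dR F K (phi F K x)) ∧
    (∀ a : BC (V := V) K,
      phi F K (Finsupp.single a 1) =
        Finsupp.single
          (⟨(a.1.2, a.1.1 \ a.1.2), a.2.2, Finset.disjoint_sdiff⟩ : BR K) 1) ∧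
    (∀ a : BC (V := V) K,
      2 * a.1.2.card + (a.1.1 \ a.1.2).card = a.1.1.card + a.1.2.card) := by
  refine ⟨phi_bij F K, ?_, ?_, phi_mul F K, phi_delta F K, ?_, ?_⟩
  · intro x y
    rw [phi_eq]
    exact Finsupp.mapDomain_add
  · intro r x
    rw [phi_eq]
    exact Finsupp.mapDomain_smul r x
  · intro a
    rw [phi_eq, Finsupp.mapDomain_single]
    have h : (eB K a) =
        (⟨(a.1.2, a.1.1 \ a.1.2), a.2.2, Finset.disjoint_sdiff⟩ : BR K) := by
      apply Subtype.ext
      apply Prod.ext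
      · rfl
      · ext x
        simp [Finset.mem_sdiff]
    rw [h]
    rfl
  · intro a
    have h1 : (a.1.1 \ a.1.2).card = a.1.1.card - a.1.2.card := Finset.card_sdiff_of_subset a.2.1
    have h2 : a.1.2.card ≤ a.1.1.card := Finset.card_le_card a.2.1
    omega
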